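/- Let A, B, C be three affinely independent points in ℝ² forming an acute triangle, let s = (dist(A,B) + dist(B,C) + dist(C,A))/2 be its semiperimeter, and let R be its circumradius (the radius of the unique circle passing through A, B, C). Then s > 2R. -/

import Mathlib

open Real EuclideanGeometry

private lemma stmt8_alg (a b c d : ℝ) (ha : 0 < a) (hb : 0 < b) (hc : 0 < c) (hd : 0 < d)
    (h1 : a^2 + c^2 = 1) (h2 : b^2 + d^2 = 1) (h3 : c*d < a*b) :
    2 < a + b + (a*d + c*b) := by
  have ha1 : a < 1 := by nlinarith
  have hb1 : b < 1 := by nlinarith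
  have step1 : (1-a)*(1-b) < c*d := by
    nlinarith [mul_pos hc hd, mul_pos ha hb, sq_nonneg (c*d - (1-a)*(1-b))]
  set s := a*d + c*b with hs
  set t := a*b - c*d with ht
  have hst : s^2 + t^2 = 1 := by rw [hs, ht]; nlinarith [h1, h2]
  have hs0 : 0 < s := by positivity
  have ht0 : 0 < t := by rw [ht]; linarith
  have hs1 : s ≤ 1 := by nlinarith
  have ht1 : t ≤ 1 := by nlinarith
  nlinarith [mul_nonneg hs0.le (sub_nonneg.2 hs1), mul_nonneg ht0.le (sub_nonneg.2 ht1)]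

private lemma stmt8_trig {α β γ : ℝ} (hα0 : 0 < α) (hα : α < π/2) (hβ0 : 0 < β) (hβ : β < π/2)
    (hγ0 : 0 < γ) (hγ : γ < π/2) (hsum : α + β + γ = π) :
    2 < Real.sin α + Real.sin β + Real.sin γ := by
  have hγe : γ = π - (α + β) := by linarith
  have hsin : Real.sin γ = Real.sin α * Real.cos β + Real.cos α * Real.sin β := by
    rw [hγe, Real.sin_pi_sub, Real.sin_add]
  have hcos : Real.cos γ = Real.sin α * Real.sin β - Real.cos α * Real.cos β := by
    rw [hγe, Real.cos_pi_sub, Real.cos_add]; ring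
  have hcosγ : 0 < Real.cos γ := Real.cos_pos_of_mem_Ioo ⟨by linarith, hγ⟩
  have := stmt8_alg (Real.sin α) (Real.sin β) (Real.cos α) (Real.cos β)
    (Real.sin_pos_of_pos_of_lt_pi hα0 (by linarith [Real.pi_pos]))
    (Real.sin_pos_of_pos_of_lt_pi hβ0 (by linarith [Real.pi_pos]))
    (Real.cos_pos_of_mem_Ioo ⟨by linarith, hα⟩)
    (Real.cos_pos_of_mem_Ioo ⟨by linarith, hβ⟩)
    (Real.sin_sq_add_cos_sq α) (Real.sin_sq_add_cos_sq β)
    (by nlinarith)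
  nlinarith

private lemma stmt8_chord {A B C O : EuclideanSpace ℝ (Fin 2)} {R : ℝ}
    (hOA : dist O A = R) (hOB : dist O B = R) (hOC : dist O C = R)
    (hAB : A ≠ B) (hAC : A ≠ C) (hBC : B ≠ C)
    (hang0 : 0 < ∠ A B C) (hangπ : ∠ A B C < π) :
    dist A C = 2 * R * Real.sin (∠ A B C) := by
  haveI : Fact (Module.finrank ℝ (EuclideanSpace ℝ (Fin 2)) = 2) :=
    ⟨finrank_euclideanSpace_fin⟩
  haveI : Module.Oriented ℝ (EuclideanSpace ℝ (Fin 2)) (Fin 2) :=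
    ⟨Module.Basis.orientation (EuclideanSpace.basisFun (Fin 2) ℝ).toBasis⟩
  set sph : EuclideanGeometry.Sphere (EuclideanSpace ℝ (Fin 2)) := ⟨O, R⟩ with hsph
  have hA : A ∈ sph := by
    rw [EuclideanGeometry.mem_sphere]; rw [dist_comm]; exact hOA
  have hB : B ∈ sph := by
    rw [EuclideanGeometry.mem_sphere]; rw [dist_comm]; exact hOB
  have hC : C ∈ sph := by
    rw [EuclideanGeometry.mem_sphere]; rw [dist_comm]; exact hOC
  have hls := EuclideanGeometry.Sphere.dist_div_sin_oangle_eq_two_mul_radius hA hB hC hAB hAC hBC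
  have hsp : 0 ≤ Real.sin (∠ A B C) :=
    Real.sin_nonneg_of_nonneg_of_le_pi (EuclideanGeometry.angle_nonneg _ _ _)
      (EuclideanGeometry.angle_le_pi _ _ _)
  have habs : |Real.Angle.sin (∡ A B C)| = Real.sin (∠ A B C) := by
    rcases EuclideanGeometry.oangle_eq_angle_or_eq_neg_angle hAB hBC.symm with h | h <;>
      rw [h] <;>
      simp [Real.Angle.sin_coe, abs_of_nonneg hsp]
  rw [habs] at hls
  have hsin_pos : 0 < Real.sin (∠ A B C) :=
    Real.sin_pos_of_pos_of_lt_pi hang0 hangπ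
  have : dist A C = 2 * sph.radius * Real.sin (∠ A B C) := by
    rw [← hls]; field_simp
  simpa using this

/-- Fact 2: for an acute triangle, the semiperimeter exceeds twice the circumradius. -/
theorem stmt_8 (A B C O : EuclideanSpace ℝ (Fin 2)) (R : ℝ)
    (hind : AffineIndependent ℝ ![A, B, C])
    (hacuteA : ∠ B A C < π / 2)
    (hacuteB : ∠ A B C < π / 2)
    (hacuteC : ∠ A C B < π / 2)
    (hOA : dist O A = R) (hOB : dist O B = R) (hOC : dist O C = R) :
    2 * R < (dist A B + dist B C + dist C A) / 2 := by
  have hnc : ¬Collinear ℝ ({A, B, C} : Set (EuclideanSpace ℝ (Fin 2))) := by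
    rw [← affineIndependent_iff_not_collinear_set]; exact hind
  have hAB : A ≠ B := fun h => (by decide : (0:Fin 3) ≠ 1)
    (hind.injective (show ![A,B,C] 0 = ![A,B,C] 1 by simpa using h))
  have hAC : A ≠ C := fun h => (by decide : (0:Fin 3) ≠ 2)
    (hind.injective (show ![A,B,C] 0 = ![A,B,C] 2 by simpa using h))
  have hBC : B ≠ C := fun h => (by decide : (1:Fin 3) ≠ 2)
    (hind.injective (show ![A,B,C] 1 = ![A,B,C] 2 by simpa using h))
  have hsetBCA : ({B, C, A} : Set (EuclideanSpace ℝ (Fin 2))) = {A, B, C} := by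
    ext x; simp only [Set.mem_insert_iff, Set.mem_singleton_iff]; tauto
  have hsetCAB : ({C, A, B} : Set (EuclideanSpace ℝ (Fin 2))) = {A, B, C} := by
    ext x; simp only [Set.mem_insert_iff, Set.mem_singleton_iff]; tauto
  have hncBCA : ¬Collinear ℝ ({B, C, A} : Set (EuclideanSpace ℝ (Fin 2))) := by
    rw [hsetBCA]; exact hnc
  have hncCAB : ¬Collinear ℝ ({C, A, B} : Set (EuclideanSpace ℝ (Fin 2))) := by
    rw [hsetCAB]; exact hnc
  -- three chord identities
  have e1 : dist A C = 2 * R * Real.sin (∠ A B C) :=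
    stmt8_chord hOA hOB hOC hAB hAC hBC
      (EuclideanGeometry.angle_pos_of_not_collinear hnc)
      (EuclideanGeometry.angle_lt_pi_of_not_collinear hnc)
  have e2 : dist B A = 2 * R * Real.sin (∠ B C A) :=
    stmt8_chord hOB hOC hOA hBC hAB.symm hAC.symm
      (EuclideanGeometry.angle_pos_of_not_collinear hncBCA)
      (EuclideanGeometry.angle_lt_pi_of_not_collinear hncBCA)
  have e3 : dist C B = 2 * R * Real.sin (∠ C A B) :=
    stmt8_chord hOC hOA hOB hAC.symm hBC.symm hAB
      (EuclideanGeometry.angle_pos_of_not_collinear hncCAB)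
      (EuclideanGeometry.angle_lt_pi_of_not_collinear hncCAB)
  have hsum : ∠ A B C + ∠ B C A + ∠ C A B = π :=
    EuclideanGeometry.angle_add_angle_add_angle_eq_pi C hAB.symm
  have hR : 0 < R := by
    have h1 : 0 < dist A B := dist_pos.2 hAB
    have h2 : dist A B ≤ dist A O + dist O B := dist_triangle A O B
    have h3 : dist A O = R := by rw [dist_comm]; exact hOA
    linarith
  have htrig : 2 < Real.sin (∠ A B C) + Real.sin (∠ B C A) + Real.sin (∠ C A B) := by
    refine stmt8_trig (α := ∠ A B C) (β := ∠ B C A) (γ := ∠ C A B) ?_ hacuteB ?_ ?_ ?_ ?_ hsum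
    · exact EuclideanGeometry.angle_pos_of_not_collinear hnc
    · exact EuclideanGeometry.angle_pos_of_not_collinear hncBCA
    · rw [EuclideanGeometry.angle_comm]; exact hacuteC
    · exact EuclideanGeometry.angle_pos_of_not_collinear hncCAB
    · rw [EuclideanGeometry.angle_comm]; exact hacuteA
  have hd1 : dist A B = 2 * R * Real.sin (∠ B C A) := by rw [dist_comm]; exact e2
  have hd2 : dist B C = 2 * R * Real.sin (∠ C A B) := by rw [dist_comm]; exact e3
  have hd3 : dist C A = 2 * R * Real.sin (∠ A B C) := by rw [dist_comm]; exact e1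
  rw [hd1, hd2, hd3]
  nlinarith [htrig, hR]
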